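/- Let α ≥ 0, a, b > 0, let f ∈ PW_α(ab), and let g be the entire function with f(x) = g(x²) for x ≥ 0. Let x ≥ 2 and suppose t_x ∈ I_x = [(x−1)², (x+1)²] satisfies t_x^{α+k} |g^{(k)}(t_x)|² ≤ (12 π² a² b²)^k ∫_{I_x} |g(s)|² s^α ds for every integer k ≥ 0. Then for every z ∈ ℂ with |z − t_x| ≤ 20x: |g(z)| ≤ e^{80√3·π a b} · t_x^{−α/2} · (∫_{I_x} |g(s)|² s^α ds)^{1/2}. -/

import Mathlib

open MeasureTheory Real Set

/-- The measure `dμ_α(x) = (2π^{α+1}/Γ(α+1)) x^{2α+1} dx` on `ℝ⁺ = [0,∞)`. -/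
noncomputable def muB (α : ℝ) : Measure ℝ :=
  (volume.restrict (Set.Ici (0:ℝ))).withDensity
    (fun x => ENNReal.ofReal (2 * π ^ (α+1) / Gamma (α+1) * x ^ (2*α+1)))

/-- The normalized Bessel function `j_α`. -/
noncomputable def besselJ (α : ℝ) (x : ℝ) : ℝ :=
  Gamma (α+1) * ∑' n : ℕ,
    ((-1:ℝ)^n / ((n.factorial : ℝ) * Gamma ((n:ℝ) + α + 1))) * (x/2)^(2*n)

/-- The Paley-Wiener space `PW_α(b)`. -/
def PW (α b : ℝ) (f : ℝ → ℂ) : Prop :=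
  MemLp f 2 (muB α) ∧ ∃ g : ℝ → ℂ, MemLp g 2 (muB α) ∧
    (∀ y, y ∉ Set.Icc 0 b → g y = 0) ∧
    ∀ x ≥ (0:ℝ), f x = ∫ y in Set.Icc 0 b, g y * (besselJ α (2*π*x*y) : ℂ) ∂(muB α)

set_option maxHeartbeats 1000000 in
/-- The power-series bound for `g` on a complex disc around the point `t_x` of
a good interval. -/
theorem good_interval_sup_estimate
    {α a b : ℝ} (hα : 0 ≤ α) (ha : 0 < a) (hb : 0 < b)
    {f : ℝ → ℂ} (hf : PW α (a*b) f) {g : ℂ → ℂ} (hg : Differentiable ℂ g)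
    (hfg : ∀ x : ℝ, 0 ≤ x → f x = g (((x:ℝ):ℂ)^2))
    (x : ℝ) (hx : 2 ≤ x) {t : ℝ} (ht : t ∈ Set.Icc ((x-1)^2) ((x+1)^2))
    (hder : ∀ k : ℕ,
      t ^ (α + (k:ℝ)) * ‖iteratedDeriv k g ((t:ℝ):ℂ)‖^2 ≤
        (12*π^2*a^2*b^2)^k *
          ∫ s in Set.Icc ((x-1)^2) ((x+1)^2), ‖g ((s:ℝ):ℂ)‖^2 * s ^ α) :
    ∀ z : ℂ, ‖z - ((t:ℝ):ℂ)‖ ≤ 20*x →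
      ‖g z‖ ≤ Real.exp (80 * Real.sqrt 3 * π * a * b) * t ^ (-α/2) *
        Real.sqrt (∫ s in Set.Icc ((x-1)^2) ((x+1)^2), ‖g ((s:ℝ):ℂ)‖^2 * s ^ α) := by
  intro z hz
  have hπ : (0:ℝ) < π := Real.pi_pos
  set C : ℝ := 12*π^2*a^2*b^2 with hCdef
  have hC0 : 0 ≤ C := by positivity
  set J : ℝ := ∫ s in Set.Icc ((x-1)^2) ((x+1)^2), ‖g ((s:ℝ):ℂ)‖^2 * s ^ α with hJdef
  have hJ0 : 0 ≤ J := by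
    apply setIntegral_nonneg measurableSet_Icc
    intro s hs
    have hs0 : (0:ℝ) ≤ s := le_trans (sq_nonneg (x-1)) hs.1
    positivity
  have ht1 : (1:ℝ) ≤ t := le_trans (by nlinarith) ht.1
  have ht0 : (0:ℝ) < t := lt_of_lt_of_le one_pos ht1
  have hsqrtt : x - 1 ≤ Real.sqrt t := by
    have := Real.sqrt_le_sqrt ht.1
    rwa [Real.sqrt_sq (by linarith)] at this
  have hst0 : (0:ℝ) < Real.sqrt t := Real.sqrt_pos.mpr ht0
  -- the ratio of the exponential series
  set r : ℝ := Real.sqrt C * (20*x) / Real.sqrt t with hrdef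
  have hr0 : 0 ≤ r := div_nonneg (mul_nonneg (Real.sqrt_nonneg _) (by linarith)) (Real.sqrt_nonneg _)
  set M : ℝ := t ^ (-α/2) * Real.sqrt J with hMdef
  have hM0 : 0 ≤ M := mul_nonneg (Real.rpow_nonneg ht0.le _) (Real.sqrt_nonneg _)
  -- bound on each iterated derivative
  have hD : ∀ k : ℕ, ‖iteratedDeriv k g ((t:ℝ):ℂ)‖ ≤
      t ^ (-α/2) * Real.sqrt J * (Real.sqrt C / Real.sqrt t)^k := by
    intro k
    set D : ℝ := ‖iteratedDeriv k g ((t:ℝ):ℂ)‖ with hDdef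
    have hD0 : 0 ≤ D := norm_nonneg _
    have hRHS0 : 0 ≤ t ^ (-α/2) * Real.sqrt J * (Real.sqrt C / Real.sqrt t)^k :=
      mul_nonneg (mul_nonneg (Real.rpow_nonneg ht0.le _) (Real.sqrt_nonneg _))
        (pow_nonneg (div_nonneg (Real.sqrt_nonneg _) (Real.sqrt_nonneg _)) k)
    have hsq : D^2 ≤ (t ^ (-α/2) * Real.sqrt J * (Real.sqrt C / Real.sqrt t)^k)^2 := by
      have h1 := hder k
      have htak : t ^ (α + (k:ℝ)) = t ^ α * t ^ k := by
        rw [Real.rpow_add ht0, Real.rpow_natCast]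
      have hta : (0:ℝ) < t ^ α := Real.rpow_pos_of_pos ht0 α
      have htk : (0:ℝ) < t ^ k := pow_pos ht0 k
      have h2 : D^2 ≤ C^k * J / (t ^ α * t ^ k) := by
        rw [le_div_iff₀ (by positivity)]
        calc D^2 * (t ^ α * t ^ k) = t ^ (α + (k:ℝ)) * D^2 := by rw [htak]; ring
          _ ≤ C^k * J := h1
      have h3 : (t ^ (-α/2) * Real.sqrt J * (Real.sqrt C / Real.sqrt t)^k)^2
          = C^k * J / (t ^ α * t ^ k) := by
        have e1 : (t ^ (-α/2))^2 = (t ^ α)⁻¹ := by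
          rw [← Real.rpow_natCast (t ^ (-α/2)) 2, ← Real.rpow_mul ht0.le, ← Real.rpow_neg ht0.le]
          norm_num
        have e2 : (Real.sqrt J)^2 = J := Real.sq_sqrt hJ0
        have e3 : (Real.sqrt C)^2 = C := Real.sq_sqrt hC0
        have e4 : (Real.sqrt t)^2 = t := Real.sq_sqrt ht0.le
        have e5 : ((Real.sqrt C / Real.sqrt t)^k)^2 = (C/t)^k := by
          rw [← pow_mul, mul_comm k 2, pow_mul, div_pow, e3, e4]
        rw [mul_pow, mul_pow, e1, e2, e5, div_pow]
        field_simp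
      rw [h3]; exact h2
    calc D = Real.sqrt (D^2) := (Real.sqrt_sq hD0).symm
      _ ≤ Real.sqrt ((t ^ (-α/2) * Real.sqrt J * (Real.sqrt C / Real.sqrt t)^k)^2) :=
          Real.sqrt_le_sqrt hsq
      _ = _ := Real.sqrt_sq hRHS0
  -- bound on each Taylor term
  have hterm : ∀ k : ℕ, ‖((k.factorial : ℂ))⁻¹ • (z - ((t:ℝ):ℂ)) ^ k •
      iteratedDeriv k g ((t:ℝ):ℂ)‖ ≤ M * (r^k / k.factorial) := by
    intro k
    have hk0 : (0:ℝ) < (k.factorial : ℝ) := by exact_mod_cast k.factorial_pos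
    rw [norm_smul, norm_smul, norm_inv, norm_pow, Complex.norm_natCast]
    have hz0 : (0:ℝ) ≤ ‖z - ((t:ℝ):ℂ)‖ := norm_nonneg _
    have h20x : (0:ℝ) ≤ 20*x := by linarith
    have hb1 : ‖z - ((t:ℝ):ℂ)‖^k ≤ (20*x)^k := pow_le_pow_left₀ hz0 hz k
    have hb2 : ‖z - ((t:ℝ):ℂ)‖^k * ‖iteratedDeriv k g ((t:ℝ):ℂ)‖ ≤ M * r^k := by
      calc ‖z - ((t:ℝ):ℂ)‖^k * ‖iteratedDeriv k g ((t:ℝ):ℂ)‖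
          ≤ (20*x)^k * (t ^ (-α/2) * Real.sqrt J * (Real.sqrt C / Real.sqrt t)^k) := by
            exact mul_le_mul hb1 (hD k) (norm_nonneg _) (pow_nonneg h20x k)
        _ = M * r^k := by
            rw [hMdef, hrdef, div_pow, mul_pow]
            ring
    calc ((k.factorial:ℝ))⁻¹ * (‖z - ((t:ℝ):ℂ)‖^k * ‖iteratedDeriv k g ((t:ℝ):ℂ)‖)
        ≤ ((k.factorial:ℝ))⁻¹ * (M * r^k) := by
          exact mul_le_mul_of_nonneg_left hb2 (inv_nonneg.mpr hk0.le)
      _ = M * (r^k / k.factorial) := by field_simp; try ring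
  -- summability of the exponential-type bound
  have hsumbound : Summable (fun k : ℕ => M * (r^k / k.factorial)) :=
    (NormedSpace.expSeries_div_summable r).mul_left M
  have hsumnorm : Summable (fun k : ℕ => ‖((k.factorial : ℂ))⁻¹ • (z - ((t:ℝ):ℂ)) ^ k •
      iteratedDeriv k g ((t:ℝ):ℂ)‖) :=
    Summable.of_nonneg_of_le (fun k => norm_nonneg _) hterm hsumbound
  -- Taylor expansion
  have htaylor := Complex.taylorSeries_eq_of_entire hg ((t:ℝ):ℂ) z
  have hgz : ‖g z‖ ≤ ∑' k : ℕ, ‖((k.factorial : ℂ))⁻¹ • (z - ((t:ℝ):ℂ)) ^ k •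
      iteratedDeriv k g ((t:ℝ):ℂ)‖ := by
    rw [← htaylor]
    exact norm_tsum_le_tsum_norm hsumnorm
  have hsum_le : (∑' k : ℕ, ‖((k.factorial : ℂ))⁻¹ • (z - ((t:ℝ):ℂ)) ^ k •
      iteratedDeriv k g ((t:ℝ):ℂ)‖) ≤ M * Real.exp r := by
    calc _ ≤ ∑' k : ℕ, M * (r^k / k.factorial) :=
          Summable.tsum_le_tsum hterm hsumnorm hsumbound
      _ = M * ∑' k : ℕ, (r^k / k.factorial) := tsum_mul_left
      _ = M * Real.exp r := by
          congr 1
          rw [Real.exp_eq_exp_ℝ, NormedSpace.exp_eq_tsum_div]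
  -- the exponent bound
  have hsqrtC : Real.sqrt C = 2 * Real.sqrt 3 * π * a * b := by
    have h3 : (Real.sqrt 3)^2 = 3 := Real.sq_sqrt (by norm_num)
    have : C = (2 * Real.sqrt 3 * π * a * b)^2 := by nlinarith [h3]
    rw [this, Real.sqrt_sq (by positivity)]
  have hrle : r ≤ 80 * Real.sqrt 3 * π * a * b := by
    have h40 : 20 * x / Real.sqrt t ≤ 40 := by
      rw [div_le_iff₀ hst0]
      nlinarith
    have hC' : (0:ℝ) ≤ 2 * Real.sqrt 3 * π * a * b := by positivity
    calc r = (2 * Real.sqrt 3 * π * a * b) * (20 * x / Real.sqrt t) := by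
          rw [hrdef, hsqrtC]; ring
      _ ≤ (2 * Real.sqrt 3 * π * a * b) * 40 := mul_le_mul_of_nonneg_left h40 hC'
      _ = 80 * Real.sqrt 3 * π * a * b := by ring
  have hexp : Real.exp r ≤ Real.exp (80 * Real.sqrt 3 * π * a * b) :=
    Real.exp_le_exp.mpr hrle
  calc ‖g z‖ ≤ M * Real.exp r := le_trans hgz hsum_le
    _ ≤ M * Real.exp (80 * Real.sqrt 3 * π * a * b) :=
        mul_le_mul_of_nonneg_left hexp hM0
    _ = _ := by rw [hMdef]; ring
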